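/- For each t > 0, the single-point set X_t = X ∩ S¹(0;t) of the spiral X = {r·e^{2πi/r} : r ∈ (0,1]} ∪ {0} satisfies d_{X_t} = ‖·‖ (trivially 1-LNE), since X ∩ S¹(0;t) = {t·e^{2πi/t}} for every t ∈ (0,1]. Hence X is 1-LLNE at 0 but not LNE at 0. -/

import Mathlib

open Set Metric Filter Topology Pointwise

noncomputable def innerDist {E : Type*} [NormedAddCommGroup E] (Z : Set E) (x y : E) : ENNReal :=
  ⨅ (γ : ℝ → E) (_ : ContinuousOn γ (Set.Icc 0 1)) (_ : Set.MapsTo γ (Set.Icc 0 1) Z)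
    (_ : γ 0 = x) (_ : γ 1 = y), eVariationOn γ (Set.Icc 0 1)

def IsLNE {E : Type*} [NormedAddCommGroup E] (Z : Set E) (C : ℝ) : Prop :=
  ∀ x ∈ Z, ∀ y ∈ Z, innerDist Z x y ≤ ENNReal.ofReal (C * ‖x - y‖)

/-- The spiral `r ↦ r·e^{2πi/r}`, `r ∈ (0,1]`, together with the origin. -/
noncomputable def spiralSet : Set ℂ :=
  {c : ℂ | ∃ r : ℝ, r ∈ Set.Ioc (0:ℝ) 1 ∧
    c = (r : ℂ) * Complex.exp (2 * Real.pi * Complex.I / (r : ℂ))} ∪ {0}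


noncomputable def sp (s : ℝ) : ℂ := (s : ℂ) * Complex.exp (2 * Real.pi * Complex.I / (s : ℂ))

lemma sp_norm {s : ℝ} (hs : 0 < s) : ‖sp s‖ = s := by
  have h : (2 * Real.pi * Complex.I / (s : ℂ)) = ((2 * Real.pi / s : ℝ) : ℂ) * Complex.I := by
    push_cast; ring
  rw [sp, norm_mul, h, Complex.norm_exp_ofReal_mul_I]
  simp [abs_of_pos hs]

lemma norm_eq_of_mem {c : ℂ} (hc : c ∈ spiralSet) (hne : c ≠ 0) :
    ∃ r : ℝ, r ∈ Set.Ioc (0:ℝ) 1 ∧ c = sp r ∧ ‖c‖ = r := by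
  rcases hc with ⟨r, hr, rfl⟩ | h
  · exact ⟨r, hr, rfl, sp_norm hr.1⟩
  · exact absurd h hne

lemma eq_sp_of_norm {c : ℂ} (hc : c ∈ spiralSet) {s : ℝ} (hs : 0 < s) (h : ‖c‖ = s) :
    c = sp s := by
  have hne : c ≠ 0 := by intro h0; rw [h0, norm_zero] at h; exact absurd h.symm (ne_of_gt hs)
  obtain ⟨r, _, rfl, hn⟩ := norm_eq_of_mem hc hne
  rw [hn] at h; rw [h]

lemma sp_val (n k : ℕ) (hn : 1 ≤ n) :
    sp (2 / (2 * n + k)) = ((2 / (2 * n + k) : ℝ) : ℂ) * (-1) ^ k := by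
  have hd : (0:ℝ) < 2 * n + k := by positivity
  have hd' : ((2 * n + k : ℝ) : ℂ) ≠ 0 := by exact_mod_cast hd.ne'
  have : (2 * Real.pi * Complex.I / ((2 / (2 * n + k) : ℝ) : ℂ))
      = ((2 * n + k : ℕ) : ℂ) * (Real.pi * Complex.I) := by
    push_cast
    field_simp
  rw [sp, this, Complex.exp_nat_mul, Complex.exp_pi_mul_I]
  rw [pow_add, pow_mul]
  norm_num

noncomputable def hitA (γ : ℝ → ℂ) (s : ℝ) : Set ℝ := Icc 0 1 ∩ {t | s ≤ ‖γ t‖}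

noncomputable def hitT (γ : ℝ → ℂ) (s : ℝ) : ℝ := sInf (hitA γ s)

lemma hitA_closed {γ : ℝ → ℂ} (hc : ContinuousOn γ (Icc 0 1)) (s : ℝ) :
    IsClosed (hitA γ s) := by
  have : hitA γ s = Icc 0 1 ∩ (fun t => ‖γ t‖) ⁻¹' Ici s := rfl
  rw [this]
  exact ContinuousOn.preimage_isClosed_of_isClosed hc.norm isClosed_Icc isClosed_Ici

lemma hitA_nonempty {γ : ℝ → ℂ} {s : ℝ} (hs : s ≤ ‖γ 1‖) : (hitA γ s).Nonempty :=
  ⟨1, ⟨by norm_num, hs⟩⟩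

lemma hitT_mem {γ : ℝ → ℂ} (hc : ContinuousOn γ (Icc 0 1)) {s : ℝ} (hs : s ≤ ‖γ 1‖) :
    hitT γ s ∈ hitA γ s :=
  IsClosed.csInf_mem (hitA_closed hc s) (hitA_nonempty hs) ⟨0, fun t ht => ht.1.1⟩

lemma hitT_mono {γ : ℝ → ℂ} (hc : ContinuousOn γ (Icc 0 1)) {s s' : ℝ}
    (hss : s ≤ s') (hs' : s' ≤ ‖γ 1‖) : hitT γ s ≤ hitT γ s' :=
  csInf_le_csInf ⟨0, fun t ht => ht.1.1⟩ (hitA_nonempty hs')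
    (fun t ht => ⟨ht.1, hss.trans ht.2⟩)

lemma hitT_norm {γ : ℝ → ℂ} (hc : ContinuousOn γ (Icc 0 1)) (h0 : γ 0 = 0)
    {s : ℝ} (h0s : 0 < s) (hs : s ≤ ‖γ 1‖) : ‖γ (hitT γ s)‖ = s := by
  have hmem := hitT_mem hc (γ := γ) hs
  refine le_antisymm ?_ hmem.2
  set T := hitT γ s with hT
  have hTpos : 0 < T := by
    rcases hmem.1.1.lt_or_eq with h | h
    · exact h
    · exfalso
      have h2 : (0:ℝ) ∈ hitA γ s := h ▸ hmem
      have h3 := h2.2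
      simp only [mem_setOf_eq, h0, norm_zero] at h3
      exact absurd h3 (not_le.2 h0s)
  have hlt : ∀ t ∈ Ico (0:ℝ) T, ‖γ t‖ ≤ s := by
    intro t ht
    by_contra hcon
    push_neg at hcon
    have htA : t ∈ hitA γ s := ⟨⟨ht.1, ht.2.le.trans hmem.1.2⟩, hcon.le⟩
    exact absurd (csInf_le ⟨0, fun x hx => hx.1.1⟩ htA) (not_le.2 ht.2)
  have hclos : T ∈ closure (Ico (0:ℝ) T) := by
    rw [closure_Ico (ne_of_lt hTpos)]
    exact ⟨hTpos.le, le_refl _⟩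
  have hne : (𝓝[Ico (0:ℝ) T] T).NeBot := mem_closure_iff_nhdsWithin_neBot.1 hclos
  have hsub : Ico (0:ℝ) T ⊆ Icc 0 1 := fun t ht => ⟨ht.1, ht.2.le.trans hmem.1.2⟩
  have htend : Tendsto (fun t => ‖γ t‖) (𝓝[Ico (0:ℝ) T] T) (𝓝 ‖γ T‖) :=
    ((hc.norm T hmem.1).mono hsub).tendsto
  exact le_of_tendsto htend (eventually_nhdsWithin_of_forall hlt)

lemma sigma_pos (n0 k : ℕ) (hn0 : 1 ≤ n0) : (0:ℝ) < 2 / (2 * n0 + k) := by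
  have : (0:ℝ) < 2 * n0 + k := by
    have : (1:ℝ) ≤ n0 := by exact_mod_cast hn0
    positivity
  positivity

lemma variation_top {γ : ℝ → ℂ} (hc : ContinuousOn γ (Icc 0 1))
    (hmaps : MapsTo γ (Icc 0 1) spiralSet) (h0 : γ 0 = 0)
    {n0 : ℕ} (hn0 : 1 ≤ n0) (hend : 1 / (n0:ℝ) ≤ ‖γ 1‖) :
    eVariationOn γ (Icc 0 1) = ⊤ := by
  by_contra hfin
  set σ : ℕ → ℝ := fun k => 2 / (2 * (n0:ℝ) + k) with hσ
  have hn0R : (1:ℝ) ≤ n0 := by exact_mod_cast hn0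
  have hσpos : ∀ k, 0 < σ k := fun k => sigma_pos n0 k hn0
  have hσle : ∀ k, σ k ≤ 1 / n0 := by
    intro k
    rw [hσ, div_le_div_iff₀ (by positivity) (by positivity)]
    push_cast; nlinarith [Nat.cast_nonneg (α := ℝ) k]
  have hσend : ∀ k, σ k ≤ ‖γ 1‖ := fun k => (hσle k).trans hend
  have hσ1 : ∀ k, σ k ≤ 1 := fun k => (hσle k).trans (by
    rw [div_le_one (by positivity)]; exact hn0R)
  have hσanti : ∀ ⦃k k' : ℕ⦄, k ≤ k' → σ k' ≤ σ k := by
    intro k k' hk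
    apply div_le_div_of_nonneg_left (by norm_num) (by positivity)
    have : (k:ℝ) ≤ k' := by exact_mod_cast hk
    linarith
  -- value of γ at hitting times
  have hval : ∀ k, γ (hitT γ (σ k)) = ((σ k : ℝ) : ℂ) * (-1) ^ k := by
    intro k
    have hmem := hitT_mem hc (hσend k)
    have hnorm := hitT_norm hc h0 (hσpos k) (hσend k)
    have hsp := eq_sp_of_norm (hmaps hmem.1) (hσpos k) hnorm
    rw [hsp, hσ]
    exact sp_val n0 k hn0
  -- partition sums
  have key : ∀ K : ℕ, ENNReal.ofReal (∑ j ∈ Finset.range K, σ j) ≤ eVariationOn γ (Icc 0 1) := by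
    intro K
    set u : ℕ → ℝ := fun j => hitT γ (σ (K - j)) with hu
    have humono : Monotone u := by
      intro j j' hj
      exact hitT_mono hc (hσanti (Nat.sub_le_sub_left hj K)) (hσend _)
    have humem : ∀ j, u j ∈ Icc (0:ℝ) 1 := fun j => (hitT_mem hc (hσend _)).1
    have hsum := eVariationOn.sum_le (f := γ) (n := K) humono humem
    refine le_trans ?_ hsum
    rw [ENNReal.ofReal_sum_of_nonneg (fun j _ => (hσpos j).le)]
    rw [← Finset.sum_range_reflect (fun j => ENNReal.ofReal (σ j)) K]
    apply Finset.sum_le_sum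
    intro j hj
    have hjK : j < K := Finset.mem_range.1 hj
    have e1 : K - (j+1) = K - 1 - j := by omega
    have e2 : K - j = (K - 1 - j) + 1 := by omega
    set m := K - 1 - j with hm
    rw [hu]
    simp only [e1, e2, hval]
    rw [edist_dist, Complex.dist_eq]
    apply ENNReal.ofReal_le_ofReal
    have : ((σ m : ℝ):ℂ) * (-1) ^ m - ((σ (m+1) : ℝ):ℂ) * (-1) ^ (m+1)
        = (-1:ℂ) ^ m * (((σ m : ℝ):ℂ) + ((σ (m+1) : ℝ):ℂ)) := by ring
    rw [this, norm_mul]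
    simp only [norm_pow]
    rw [show ‖(-1:ℂ)‖ = 1 by simp, one_pow, one_mul]
    have : ((σ m : ℝ):ℂ) + ((σ (m+1) : ℝ):ℂ) = (((σ m + σ (m+1) : ℝ)):ℂ) := by push_cast; ring
    rw [this, Complex.norm_real, Real.norm_of_nonneg (by positivity)]
    linarith [hσpos (m+1)]
  -- contradiction with divergence of harmonic series
  set B := (eVariationOn γ (Icc 0 1)).toReal with hB
  have hbound : ∀ K : ℕ, ∑ j ∈ Finset.range K, σ j ≤ B := by
    intro K
    rw [hB, ← ENNReal.ofReal_le_iff_le_toReal hfin]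
    exact key K
  have hdiv : Tendsto (fun K => ∑ j ∈ Finset.range K, σ j) atTop atTop := by
    apply tendsto_atTop_mono (f := fun K => (1/(n0:ℝ)) * ∑ j ∈ Finset.range K, 1/(j+1 : ℝ))
    · intro K
      rw [Finset.mul_sum]
      apply Finset.sum_le_sum
      intro j _
      rw [hσ]
      rw [div_mul_div_comm, one_mul, div_le_div_iff₀ (by positivity) (by positivity)]
      push_cast
      nlinarith [Nat.cast_nonneg (α := ℝ) j, hn0R]
    · exact Real.tendsto_sum_range_one_div_nat_succ_atTop.const_mul_atTop (by positivity)
  obtain ⟨K, hK⟩ := (hdiv.eventually (eventually_gt_atTop B)).exists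
  exact absurd (hbound K) (not_le.2 hK)


lemma part1 : ∀ t ∈ Set.Ioc (0:ℝ) 1, spiralSet ∩ Metric.sphere (0 : ℂ) t =
    {(t : ℂ) * Complex.exp (2 * Real.pi * Complex.I / (t : ℂ))} := by
  intro t ht
  ext c
  constructor
  · rintro ⟨hsp, hsph⟩
    have hn : ‖c‖ = t := by simpa [Complex.dist_eq] using hsph
    exact eq_sp_of_norm hsp ht.1 hn
  · rintro rfl
    refine ⟨Or.inl ⟨t, ht, rfl⟩, ?_⟩
    simp only [mem_sphere_iff_norm, sub_zero]
    exact sp_norm ht.1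

theorem stmt_7 :
    (∀ t ∈ Set.Ioc (0:ℝ) 1, spiralSet ∩ Metric.sphere (0 : ℂ) t =
      {(t : ℂ) * Complex.exp (2 * Real.pi * Complex.I / (t : ℂ))}) ∧
    (∀ t ∈ Set.Ioc (0:ℝ) 1, IsLNE (spiralSet ∩ Metric.sphere (0 : ℂ) t) 1) ∧
    ¬ ∃ U ∈ 𝓝 (0 : ℂ), ∃ C : ℝ, IsLNE (spiralSet ∩ U) C := by
  refine ⟨part1, ?_, ?_⟩
  · -- singletons are 1-LNE
    intro t ht x hx y hy
    rw [part1 t ht] at hx hy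
    rw [mem_singleton_iff] at hx hy
    have hxy : x = y := hx.trans hy.symm
    subst hxy
    have hmem : x ∈ spiralSet ∩ Metric.sphere (0:ℂ) t := by
      rw [part1 t ht]; exact hx
    have hzero : innerDist (spiralSet ∩ Metric.sphere (0:ℂ) t) x x = 0 := by
      apply le_antisymm _ zero_le
      refine le_trans (iInf_le _ (fun _ => x)) ?_
      refine le_trans (iInf_le _ continuousOn_const) ?_
      refine le_trans (iInf_le _ (fun _ _ => hmem)) ?_
      refine le_trans (iInf_le _ rfl) ?_
      refine le_trans (iInf_le _ rfl) ?_
      rw [eVariationOn.constant_on]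
      intro a ha b hb
      obtain ⟨_, _, rfl⟩ := ha
      obtain ⟨_, _, rfl⟩ := hb
      rfl
    rw [hzero]
    exact zero_le
  · rintro ⟨U, hU, C, hLNE⟩
    obtain ⟨ε, hε, hball⟩ := Metric.mem_nhds_iff.1 hU
    obtain ⟨n, hn⟩ := exists_nat_one_div_lt hε
    set n0 : ℕ := n + 1 with hn0def
    have hn0 : 1 ≤ n0 := Nat.le_add_left 1 n
    set r : ℝ := 1 / (n0:ℝ) with hr
    have hrpos : 0 < r := by positivity
    have hrIoc : r ∈ Set.Ioc (0:ℝ) 1 := by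
      refine ⟨hrpos, ?_⟩
      rw [hr, div_le_one (by positivity)]
      exact_mod_cast hn0
    have hrε : r < ε := by
      rw [hr]; push_cast [hn0def]; exact hn
    set y : ℂ := sp r with hy
    have hysp : y ∈ spiralSet := Or.inl ⟨r, hrIoc, rfl⟩
    have hyn : ‖y‖ = r := sp_norm hrpos
    have hyU : y ∈ U := hball (by simp [mem_ball, Complex.dist_eq, hyn, hrε])
    have h0U : (0:ℂ) ∈ spiralSet ∩ U := ⟨Or.inr rfl, mem_of_mem_nhds hU⟩
    have hlt : innerDist (spiralSet ∩ U) 0 y < ⊤ :=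
      lt_of_le_of_lt (hLNE 0 h0U y ⟨hysp, hyU⟩) ENNReal.ofReal_lt_top
    rw [innerDist] at hlt
    rw [iInf_lt_iff] at hlt
    obtain ⟨γ, hlt⟩ := hlt
    rw [iInf_lt_iff] at hlt
    obtain ⟨hcont, hlt⟩ := hlt
    rw [iInf_lt_iff] at hlt
    obtain ⟨hmaps, hlt⟩ := hlt
    rw [iInf_lt_iff] at hlt
    obtain ⟨hγ0, hlt⟩ := hlt
    rw [iInf_lt_iff] at hlt
    obtain ⟨hγ1, hlt⟩ := hlt
    have hmaps' : MapsTo γ (Icc 0 1) spiralSet :=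
      hmaps.mono_right inter_subset_left
    have hend : 1 / (n0:ℝ) ≤ ‖γ 1‖ := by
      rw [hγ1, hyn]
    have := variation_top hcont hmaps' hγ0 hn0 hend
    rw [this] at hlt
    exact absurd hlt (lt_irrefl _)
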